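/- Let B be a k×k rational matrix, x ∈ ℚ, u a 1×k rational row vector, and v a k×1 rational column vector. Let A be the (k+2)×(k+2) rational matrix given in block form (with respect to the decomposition k+2 = 1+1+k) by A = [[0,0,0],[1,x,u],[0,v,B]] (first row identically zero; second row beginning 1, x and continuing with u; remaining rows having first entry 0, second column entries v, and remaining block B). Then A ⊞ (−B) is rationally null-cobordant; that is, a rational row enlargement A of B is rationally cobordant to B. -/

import Mathlib

open Matrix

/-- A square matrix over a commutative ring is *null-cobordant* if its size is even,
say `n = 2 * r`, and it is congruent, via a matrix `P` with unit determinant, to a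
block matrix whose upper-left `r × r` block is zero. -/
def Matrix.IsNullCobordant {R : Type*} [CommRing R] {n : ℕ}
    (A : Matrix (Fin n) (Fin n) R) : Prop :=
  ∃ r : ℕ, n = 2 * r ∧ ∃ P : Matrix (Fin n) (Fin n) R, IsUnit P.det ∧
    ∀ i j : Fin n, (i : ℕ) < r → (j : ℕ) < r → (Pᵀ * A * P) i j = 0

/-- The block sum `A ⊞ B` of square matrices: the block-diagonal matrix `[[A,0],[0,B]]`. -/
def Matrix.blockSum {R : Type*} [CommRing R] {p q : ℕ}
    (A : Matrix (Fin p) (Fin p) R) (B : Matrix (Fin q) (Fin q) R) :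
    Matrix (Fin (p + q)) (Fin (p + q)) R :=
  Matrix.reindex finSumFinEquiv finSumFinEquiv (Matrix.fromBlocks A 0 0 B)

namespace RowEnlAux

variable (k : ℕ) (B : Matrix (Fin k) (Fin k) ℚ) (x : ℚ) (u v : Fin k → ℚ)

/-- The row enlargement, as a matrix over the sum type `Fin 2 ⊕ Fin k`. -/
def A0 : Matrix (Fin 2 ⊕ Fin k) (Fin 2 ⊕ Fin k) ℚ :=
  Matrix.fromBlocks !![0, 0; 1, x]
    (Matrix.of fun (i : Fin 2) j => if i = 0 then 0 else u j)
    (Matrix.of fun i (j : Fin 2) => if j = 0 then 0 else v i) B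

/-- `A0 ⊞ (-B)` over the sum type `(Fin 2 ⊕ Fin k) ⊕ Fin k`. -/
def M0 : Matrix ((Fin 2 ⊕ Fin k) ⊕ Fin k) ((Fin 2 ⊕ Fin k) ⊕ Fin k) ℚ :=
  Matrix.fromBlocks (A0 k B x u v) 0 0 (-B)

/-- The `k × (2 + k)` matrix `[0 | 1]`. -/
def Cm : Matrix (Fin k) (Fin 2 ⊕ Fin k) ℚ := Matrix.fromCols 0 1

/-- The congruence matrix `[[1,0],[C,1]]`. -/
def P0 : Matrix ((Fin 2 ⊕ Fin k) ⊕ Fin k) ((Fin 2 ⊕ Fin k) ⊕ Fin k) ℚ :=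
  Matrix.fromBlocks 1 0 (Cm k) 1

/-- The global reindexing equivalence. -/
def E : ((Fin 2 ⊕ Fin k) ⊕ Fin k) ≃ Fin (2 + k + k) :=
  (Equiv.sumCongr finSumFinEquiv (Equiv.refl (Fin k))).trans finSumFinEquiv

lemma hM :
    (Matrix.reindex finSumFinEquiv finSumFinEquiv (A0 k B x u v)).blockSum (-B)
      = Matrix.reindex (E k) (E k) (M0 k B x u v) := by
  unfold Matrix.blockSum M0
  ext i j
  simp only [reindex_apply, submatrix_apply, E, Equiv.symm_trans_apply,
    Equiv.sumCongr_symm, Equiv.sumCongr_apply, Equiv.refl_symm]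
  rcases h1 : finSumFinEquiv.symm i with a | a <;>
    rcases h2 : finSumFinEquiv.symm j with b | b <;>
      simp [Matrix.fromBlocks]

lemma hQ :
    (P0 k)ᵀ * M0 k B x u v * P0 k =
      Matrix.fromBlocks (A0 k B x u v + Matrix.fromRows 0 (Matrix.fromCols 0 (-B)))
        ((Cm k)ᵀ * (-B)) ((-B) * Cm k) (-B) := by
  unfold P0 M0 Cm
  simp [Matrix.fromBlocks_transpose, Matrix.fromBlocks_multiply,
    Matrix.transpose_fromCols, Matrix.fromRows_mul, Matrix.mul_fromCols,
    Matrix.mul_assoc]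
  ext (i | i) (j | j) <;> simp

lemma hQentry (s t : Fin 2 ⊕ Fin k)
    (hs : s = Sum.inl 0 ∨ ∃ a, s = Sum.inr a)
    (ht : t = Sum.inl 0 ∨ ∃ a, t = Sum.inr a) :
    ((P0 k)ᵀ * M0 k B x u v * P0 k) (Sum.inl s) (Sum.inl t) = 0 := by
  rw [hQ]
  rcases hs with rfl | ⟨a, rfl⟩ <;> rcases ht with rfl | ⟨b, rfl⟩ <;>
    simp [A0, Matrix.fromBlocks]

lemma Esymm_zero' : (E k).symm (Fin.castAdd k (Fin.castAdd k (0 : Fin 2))) = Sum.inl (Sum.inl 0) := by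
  simp [E, finSumFinEquiv_symm_apply_castAdd]

lemma Esymm_mid' (b : Fin k) :
    (E k).symm (Fin.castAdd k (Fin.natAdd 2 b)) = Sum.inl (Sum.inr b) := by
  simp [E, finSumFinEquiv_symm_apply_castAdd, finSumFinEquiv_symm_apply_natAdd]

end RowEnlAux

theorem row_enlargement_cobordant (k : ℕ) (B : Matrix (Fin k) (Fin k) ℚ)
    (x : ℚ) (u v : Fin k → ℚ) :
    ((Matrix.reindex finSumFinEquiv finSumFinEquiv
        (Matrix.fromBlocks !![0, 0; 1, x]
          (Matrix.of fun (i : Fin 2) j => if i = 0 then 0 else u j)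
          (Matrix.of fun i (j : Fin 2) => if j = 0 then 0 else v i)
          B)).blockSum (-B)).IsNullCobordant := by
  classical
  rw [show (Matrix.fromBlocks !![0, 0; 1, x]
          (Matrix.of fun (i : Fin 2) j => if i = 0 then 0 else u j)
          (Matrix.of fun i (j : Fin 2) => if j = 0 then 0 else v i)
          B) = RowEnlAux.A0 k B x u v from rfl, RowEnlAux.hM]
  set E := RowEnlAux.E k with hE
  set P0 := RowEnlAux.P0 k with hP0
  set M0 := RowEnlAux.M0 k B x u v with hM0
  -- the swap permutation
  set c₁ : Fin (2 + k + k) := ⟨1, by omega⟩ with hc₁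
  set c₂ : Fin (2 + k + k) := ⟨k + 1, by omega⟩ with hc₂
  set π : Equiv.Perm (Fin (2 + k + k)) := Equiv.swap c₁ c₂ with hπ
  refine ⟨k + 1, by omega, (Matrix.reindex E E P0).submatrix id ⇑π, ?_, ?_⟩
  · rw [Matrix.det_permute', Matrix.det_reindex_self]
    have : P0.det = 1 := by
      rw [hP0]
      unfold RowEnlAux.P0
      rw [Matrix.det_fromBlocks_zero₁₂]
      simp
    rw [this, mul_one]
    rcases Int.units_eq_one_or (Equiv.Perm.sign π) with h | h <;> simp [h]
  · intro i j hi hj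
    have key : (((Matrix.reindex E E P0).submatrix id ⇑π)ᵀ * Matrix.reindex E E M0 *
        (Matrix.reindex E E P0).submatrix id ⇑π) i j
        = (P0ᵀ * M0 * P0) (E.symm (π i)) (E.symm (π j)) := by
      rw [Matrix.transpose_submatrix, Matrix.transpose_reindex]
      rw [Matrix.reindex_apply, Matrix.reindex_apply, Matrix.reindex_apply]
      rw [Matrix.submatrix_submatrix, Matrix.submatrix_submatrix]
      simp only [Function.comp_id, Function.id_comp]
      rw [Matrix.submatrix_mul_equiv P0ᵀ M0 (⇑E.symm ∘ ⇑π) E.symm ⇑E.symm]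
      rw [Matrix.submatrix_mul_equiv (P0ᵀ * M0) P0 (⇑E.symm ∘ ⇑π) E.symm (⇑E.symm ∘ ⇑π)]
      rw [Matrix.submatrix_apply]
      rfl
    rw [key]
    -- identify the images
    have hin : ∀ a : Fin (2 + k + k), (a : ℕ) < k + 1 →
        ∃ s : Fin 2 ⊕ Fin k, E.symm (π a) = Sum.inl s ∧
          (s = Sum.inl 0 ∨ ∃ b, s = Sum.inr b) := by
      intro a ha
      by_cases h1 : (a : ℕ) = 1
      · have hk : 1 ≤ k := by omega
        have ha1 : a = c₁ := by rw [hc₁]; ext; exact h1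
        have hc : c₂ = Fin.castAdd k (Fin.natAdd 2 (⟨k - 1, by omega⟩ : Fin k)) := by
          rw [hc₂]; ext; simp; omega
        rw [ha1, hπ, Equiv.swap_apply_left, hc, RowEnlAux.Esymm_mid']
        exact ⟨_, rfl, Or.inr ⟨_, rfl⟩⟩
      · have hne1 : a ≠ c₁ := by
          intro h; rw [h, hc₁] at h1; simp at h1
        have hne2 : a ≠ c₂ := by
          intro h; rw [h, hc₂] at ha; simp at ha
        rw [hπ, Equiv.swap_apply_of_ne_of_ne hne1 hne2]
        by_cases h0 : (a : ℕ) = 0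
        · have : a = Fin.castAdd k (Fin.castAdd k (0 : Fin 2)) := by
            ext; simpa using h0
          rw [this, RowEnlAux.Esymm_zero']
          exact ⟨_, rfl, Or.inl rfl⟩
        · have h2 : 2 ≤ (a : ℕ) := by omega
          have : a = Fin.castAdd k (Fin.natAdd 2 (⟨(a : ℕ) - 2, by omega⟩ : Fin k)) := by
            ext; simp; omega
          rw [this, RowEnlAux.Esymm_mid']
          exact ⟨_, rfl, Or.inr ⟨_, rfl⟩⟩
    obtain ⟨s, hs, hsmem⟩ := hin i hi
    obtain ⟨t, ht, htmem⟩ := hin j hj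
    rw [hs, ht]
    exact RowEnlAux.hQentry k B x u v s t hsmem htmem
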